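/- Let (T,<_T,<_lex) be a lexicographically ordered Aronszajn tree and let B ⊆ [T]² be a normal family. Then B contains an uncountable separated subfamily; indeed, there are an uncountable B' ⊆ B and c ∈ T such that b(0) <_lex c <_lex b(1) for all b ∈ B'. -/

import Mathlib

noncomputable section

open Set

/-- The ordinal `ω₁`. -/
def omega1 : Ordinal := (Cardinal.aleph 1).ord

/-- A set-theoretic tree: a partial order in which the set of predecessors of every
node is well-ordered by the order. -/
def IsSetTree (T : Type) [PartialOrder T] : Prop :=
  ∀ t : T, IsWellOrder {s : T // s < t} (fun a b => (a : T) < (b : T))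

/-- The height of a node: the order type of its set of predecessors. -/
noncomputable def nodeHt {T : Type} [PartialOrder T] (hT : IsSetTree T) (t : T) : Ordinal :=
  @Ordinal.type {s : T // s < t} (fun a b => (a : T) < (b : T)) (hT t)

-- `restr hT t ξ` is the unique `s ≤ t` of height `ξ` (junk value `t` if there is none).
open Classical in
noncomputable def restr {T : Type} [PartialOrder T] (hT : IsSetTree T) (t : T) (ξ : Ordinal) : T :=
  if h : ∃ s : T, s ≤ t ∧ nodeHt hT s = ξ then h.choose else t

/-- Incomparability in the tree order. -/
def Incomp {T : Type} [PartialOrder T] (s t : T) : Prop := ¬ s ≤ t ∧ ¬ t ≤ s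

/-- `Δ(s,t)`: the least `α` such that `s↾α ≠ t↾α`. -/
noncomputable def delta {T : Type} [PartialOrder T] (hT : IsSetTree T) (s t : T) : Ordinal :=
  sInf {α : Ordinal | restr hT s α ≠ restr hT t α}

/-- A family of linear orders on the levels of the tree, coded as a single relation
relating only nodes of the same height. -/
def IsLevelOrderFamily {T : Type} [PartialOrder T] (hT : IsSetTree T) (lo : T → T → Prop) : Prop :=
  (∀ s t, lo s t → nodeHt hT s = nodeHt hT t) ∧
  (∀ t, ¬ lo t t) ∧
  (∀ s t u, lo s t → lo t u → lo s u) ∧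
  (∀ s t, s ≠ t → nodeHt hT s = nodeHt hT t → lo s t ∨ lo t s)

/-- The lexicographic ordering induced by the level orders `lo`:
`t <lex s` iff `t <_T s`, or `t ⊥ s` and `t↾Δ(t,s) ◁ s↾Δ(t,s)`. -/
def lexLT {T : Type} [PartialOrder T] (hT : IsSetTree T) (lo : T → T → Prop) (t s : T) : Prop :=
  t < s ∨ (Incomp t s ∧ lo (restr hT t (delta hT t s)) (restr hT s (delta hT t s)))

/-- An `ω₁`-tree: height `ω₁` and all levels countable. -/
def IsOmega1Tree {T : Type} [PartialOrder T] (hT : IsSetTree T) : Prop :=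
  (∀ t : T, nodeHt hT t < omega1) ∧
  (∀ α : Ordinal, α < omega1 → ∃ t : T, nodeHt hT t = α) ∧
  (∀ α : Ordinal, {t : T | nodeHt hT t = α}.Countable)

def NoUncountableChain (T : Type) [PartialOrder T] : Prop :=
  ∀ C : Set T, IsChain (· ≤ ·) C → C.Countable

def NoUncountableAntichain (T : Type) [PartialOrder T] : Prop :=
  ∀ A : Set T, (∀ s ∈ A, ∀ t ∈ A, s ≠ t → Incomp s t) → A.Countable

/-- An Aronszajn tree: an `ω₁`-tree with no uncountable chains. -/
def IsAronszajnTree {T : Type} [PartialOrder T] (hT : IsSetTree T) : Prop :=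
  IsOmega1Tree hT ∧ NoUncountableChain T

/-- A Suslin tree: an `ω₁`-tree with no uncountable chains and no uncountable antichains. -/
def IsSuslinTree {T : Type} [PartialOrder T] (hT : IsSetTree T) : Prop :=
  IsOmega1Tree hT ∧ NoUncountableChain T ∧ NoUncountableAntichain T

/-- A family of pairs is pairwise disjoint if distinct members are disjoint as sets. -/
def PairwiseDisjointPairs {T : Type} (A : Set (T × T)) : Prop :=
  ∀ a ∈ A, ∀ b ∈ A, a ≠ b → a.1 ≠ b.1 ∧ a.1 ≠ b.2 ∧ a.2 ≠ b.1 ∧ a.2 ≠ b.2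

/-- A family of pairs is separated if some `c` lies strictly between the coordinates
of every member. -/
def SeparatedPairs {T : Type} (lt : T → T → Prop) (A : Set (T × T)) : Prop :=
  ∃ c : T, ∀ a ∈ A, lt a.1 c ∧ lt c a.2

/-- `tpPerp hT lo a b t`: the pair `(a,b)` realizes the type `t` in the lexicographic
order and moreover `a i ⊥ b i` in the tree order, for `i < 2`. (`true` codes `<`.) -/
def tpPerp {T : Type} [PartialOrder T] (hT : IsSetTree T) (lo : T → T → Prop)
    (a b : T × T) (t : Fin 2 → Bool) : Prop :=
  Incomp a.1 b.1 ∧ Incomp a.2 b.2 ∧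
  (if t 0 then lexLT hT lo a.1 b.1 else lexLT hT lo b.1 a.1) ∧
  (if t 1 then lexLT hT lo a.2 b.2 else lexLT hT lo b.2 a.2)

/-- The weakly bi-entangled property of a lexicographically ordered tree. -/
def WeaklyBiEntangled {T : Type} [PartialOrder T] (hT : IsSetTree T) (lo : T → T → Prop) : Prop :=
  ∀ A : Set (T × T), ¬ A.Countable →
    (∀ a ∈ A, lexLT hT lo a.1 a.2) →
    PairwiseDisjointPairs A → SeparatedPairs (lexLT hT lo) A →
    ∃ ξ₀ : Ordinal, ξ₀ < omega1 ∧
      ∀ b ∈ A, ξ₀ ≤ nodeHt hT b.1 → ξ₀ ≤ nodeHt hT b.2 →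
        ∀ t : Fin 2 → Bool,
          ∃ a ∈ A, nodeHt hT a.1 < ξ₀ ∧ nodeHt hT a.2 < ξ₀ ∧ tpPerp hT lo a b t

/-- A normal family of pairs. -/
def NormalFamily {T : Type} [PartialOrder T] (hT : IsSetTree T) (lo : T → T → Prop)
    (B : Set (T × T)) : Prop :=
  ¬ B.Countable ∧
  (∀ b ∈ B, lexLT hT lo b.1 b.2) ∧
  PairwiseDisjointPairs B ∧
  (∀ b ∈ B, nodeHt hT b.1 = nodeHt hT b.2) ∧
  BddAbove {α : Ordinal | ∃ b ∈ B, α = delta hT b.1 b.2} ∧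
  sSup {α : Ordinal | ∃ b ∈ B, α = delta hT b.1 b.2} <
    sInf {α : Ordinal | ∃ b ∈ B, α = nodeHt hT b.1} ∧
  {α : Ordinal | ∃ b ∈ B, α = nodeHt hT b.1} =
    {α : Ordinal | sInf {α : Ordinal | ∃ b ∈ B, α = nodeHt hT b.1} ≤ α ∧ α < omega1}


section Basics
variable {T : Type} [PartialOrder T] (hT : IsSetTree T)

lemma nodeHt_lt_of_lt {s t : T} (h : s < t) : nodeHt hT s < nodeHt hT t := by
  haveI := hT t; haveI := hT s
  have key : nodeHt hT s =
      Ordinal.typein (fun a b : {u : T // u < t} => (a : T) < (b : T)) ⟨s, h⟩ := by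
    rw [← Ordinal.type_subrel]
    refine Ordinal.type_eq.2 ⟨RelIso.mk (Equiv.mk
      (fun u => ⟨⟨u.1, u.2.trans h⟩, u.2⟩)
      (fun y => ⟨y.1.1, y.2⟩) (fun u => rfl) (fun y => rfl)) (fun {a b} => Iff.rfl)⟩
  rw [key]
  exact Ordinal.typein_lt_type _ _

lemma nodeHt_le_of_le {s t : T} (h : s ≤ t) : nodeHt hT s ≤ nodeHt hT t := by
  rcases h.lt_or_eq with h | rfl
  · exact (nodeHt_lt_of_lt hT h).le
  · exact le_rfl

lemma eq_of_le_of_nodeHt_eq {s t : T} (h : s ≤ t) (he : nodeHt hT s = nodeHt hT t) : s = t := by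
  rcases h.lt_or_eq with h | rfl
  · exact absurd he (nodeHt_lt_of_lt hT h).ne
  · rfl

/-- Uniqueness of restrictions. -/
lemma restr_unique_aux {s₁ s₂ t : T} (h₁ : s₁ ≤ t) (h₂ : s₂ ≤ t)
    (he : nodeHt hT s₁ = nodeHt hT s₂) : s₁ = s₂ := by
  rcases h₁.lt_or_eq with h₁ | rfl
  · rcases h₂.lt_or_eq with h₂ | rfl
    · haveI := hT t
      rcases trichotomous_of (fun a b : {u : T // u < t} => (a : T) < (b : T)) ⟨s₁, h₁⟩ ⟨s₂, h₂⟩ with h | h | h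
      · exact absurd he (nodeHt_lt_of_lt hT h).ne
      · exact congrArg Subtype.val h
      · exact absurd he.symm (nodeHt_lt_of_lt hT h).ne
    · exact absurd he (nodeHt_lt_of_lt hT h₁).ne
  · rcases h₂.lt_or_eq with h₂ | rfl
    · exact absurd he.symm (nodeHt_lt_of_lt hT h₂).ne
    · rfl

lemma restr_exists {t : T} {ξ : Ordinal} (h : ξ ≤ nodeHt hT t) :
    ∃ s : T, s ≤ t ∧ nodeHt hT s = ξ := by
  rcases h.lt_or_eq with h | rfl
  · haveI := hT t
    obtain ⟨a, ha⟩ := Ordinal.typein_surj (fun a b : {u : T // u < t} => (a : T) < (b : T)) h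
    refine ⟨a.1, a.2.le, ?_⟩
    rw [← ha]
    haveI := hT a.1
    rw [← Ordinal.type_subrel]
    refine Ordinal.type_eq.2 ⟨RelIso.mk (Equiv.mk
      (fun u => ⟨⟨u.1, u.2.trans a.2⟩, u.2⟩)
      (fun y => ⟨y.1.1, y.2⟩) (fun u => rfl) (fun y => rfl)) (fun {a b} => Iff.rfl)⟩
  · exact ⟨t, le_rfl, rfl⟩

lemma restr_spec {t : T} {ξ : Ordinal} (h : ξ ≤ nodeHt hT t) :
    restr hT t ξ ≤ t ∧ nodeHt hT (restr hT t ξ) = ξ := by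
  rw [restr, dif_pos (restr_exists hT h)]
  exact (restr_exists hT h).choose_spec

lemma restr_le {t : T} {ξ : Ordinal} (h : ξ ≤ nodeHt hT t) : restr hT t ξ ≤ t :=
  (restr_spec hT h).1

lemma nodeHt_restr {t : T} {ξ : Ordinal} (h : ξ ≤ nodeHt hT t) : nodeHt hT (restr hT t ξ) = ξ :=
  (restr_spec hT h).2

lemma restr_eq_of {s t : T} (h : s ≤ t) {ξ : Ordinal} (he : nodeHt hT s = ξ) :
    restr hT t ξ = s := by
  have hle : ξ ≤ nodeHt hT t := he ▸ nodeHt_le_of_le hT h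
  exact restr_unique_aux hT (restr_le hT hle) h ((nodeHt_restr hT hle).trans he.symm)

lemma restr_self (t : T) : restr hT t (nodeHt hT t) = t :=
  restr_eq_of hT le_rfl rfl

lemma restr_trans {s t : T} (h : s ≤ t) {ξ : Ordinal} (hξ : ξ ≤ nodeHt hT s) :
    restr hT t ξ = restr hT s ξ :=
  restr_eq_of hT ((restr_le hT hξ).trans h) (nodeHt_restr hT hξ)

/-- delta basics for distinct nodes of equal height -/
lemma delta_spec {u v : T} (hne : u ≠ v) (he : nodeHt hT u = nodeHt hT v) :
    restr hT u (delta hT u v) ≠ restr hT v (delta hT u v) ∧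
    (∀ α < delta hT u v, restr hT u α = restr hT v α) ∧ delta hT u v ≤ nodeHt hT u := by
  have hmem : nodeHt hT u ∈ {α : Ordinal | restr hT u α ≠ restr hT v α} := by
    simp only [mem_setOf_eq, restr_self]
    rw [he, restr_self]
    exact hne
  have hne' : {α : Ordinal | restr hT u α ≠ restr hT v α}.Nonempty := ⟨_, hmem⟩
  refine ⟨csInf_mem hne', fun α hα => ?_, csInf_le (OrderBot.bddBelow _) hmem⟩
  by_contra hc
  exact absurd hα (not_lt.2 (csInf_le (OrderBot.bddBelow _) hc))

end Basics

/-- Every normal family in a lexicographically ordered Aronszajn tree contains an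
uncountable separated subfamily: there are an uncountable `B' ⊆ B` and `c ∈ T` with
`b(0) <lex c <lex b(1)` for all `b ∈ B'`. -/
theorem normalFamily_has_uncountable_separated_subfamily {T : Type} [PartialOrder T]
    (hT : IsSetTree T) (lo : T → T → Prop) (hlo : IsLevelOrderFamily hT lo)
    (hAron : IsAronszajnTree hT)
    (B : Set (T × T)) (hB : NormalFamily hT lo B) :
    ∃ B' ⊆ B, ¬ B'.Countable ∧
      ∃ c : T, ∀ b ∈ B', lexLT hT lo b.1 c ∧ lexLT hT lo c b.2 := by
  obtain ⟨hBu, hBlex, hBdisj, hBhts, hBbdd, hBlt, _hBint⟩ := hB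
  set ds := sSup {α : Ordinal | ∃ b ∈ B, α = delta hT b.1 b.2} with hds
  set mu := sInf {α : Ordinal | ∃ b ∈ B, α = nodeHt hT b.1} with hmu
  -- basic facts about members of B
  have hdle : ∀ b ∈ B, delta hT b.1 b.2 ≤ ds := fun b hb =>
    le_csSup hBbdd ⟨b, hb, rfl⟩
  have hmule : ∀ b ∈ B, mu ≤ nodeHt hT b.1 := fun b hb =>
    csInf_le (OrderBot.bddBelow _) ⟨b, hb, rfl⟩
  have hdsmu : ds + 1 ≤ mu := by
    rw [Ordinal.add_one_eq_succ, Order.succ_le_iff]; exact hBlt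
  have hBne : B.Nonempty := by
    rcases B.eq_empty_or_nonempty with h | h
    · exact absurd (h ▸ Set.countable_empty) hBu
    · exact h
  obtain ⟨b₀, hb₀⟩ := hBne
  have homega : ∀ t : T, nodeHt hT t < omega1 := hAron.1.1
  have hlim : Order.IsSuccLimit omega1 := Cardinal.isSuccLimit_ord (Cardinal.aleph0_le_aleph 1)
  have hds1 : ds + 1 < omega1 := by
    rw [Ordinal.add_one_eq_succ]
    exact hlim.succ_lt (lt_of_lt_of_le hBlt ((hmule b₀ hb₀).trans (homega b₀.1).le))
  -- the set of nodes of height ≤ ds + 1 is countable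
  have hLcnt : {u : T | nodeHt hT u ≤ ds + 1}.Countable := by
    have hIic : (Set.Iic (ds + 1) : Set Ordinal).Countable := by
      have h1 : (Set.Iio (ds + 1 + 1) : Set Ordinal).Countable := by
        rw [Cardinal.countable_iff_lt_aleph_one, Ordinal.mk_Iio_ordinal,
          Cardinal.lift_lt_aleph_one, ← Cardinal.lt_ord]
        rw [Ordinal.add_one_eq_succ]
        exact hlim.succ_lt hds1
      exact h1.mono fun α (hα : α ≤ ds + 1) => Order.lt_add_one_iff.2 hα
    have : {u : T | nodeHt hT u ≤ ds + 1} ⊆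
        ⋃ α ∈ (Set.Iic (ds + 1) : Set Ordinal), {t : T | nodeHt hT t = α} := by
      intro u hu
      exact Set.mem_biUnion hu rfl
    exact Set.Countable.mono this (hIic.biUnion fun α _ => hAron.1.2.2 α)
  -- remove the level ds + 1
  set B₁ := {b ∈ B | nodeHt hT b.1 ≠ ds + 1} with hB₁
  have hB₁u : ¬ B₁.Countable := by
    intro hc
    apply hBu
    have h2 : {b ∈ B | nodeHt hT b.1 = ds + 1}.Countable := by
      apply Set.countable_of_injective_of_countable_image
        (f := Prod.fst) (s := {b ∈ B | nodeHt hT b.1 = ds + 1})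
      · intro a ha b hb hab
        by_contra hne
        exact (hBdisj a ha.1 b hb.1 hne).1 hab
      · refine (hAron.1.2.2 (ds + 1)).mono ?_
        rintro x ⟨b, hb, rfl⟩
        exact hb.2
    have : B ⊆ B₁ ∪ {b ∈ B | nodeHt hT b.1 = ds + 1} := by
      intro b hb
      by_cases h : nodeHt hT b.1 = ds + 1
      · exact Or.inr ⟨hb, h⟩
      · exact Or.inl ⟨hb, h⟩
    exact Set.Countable.mono this (hc.union h2)
  -- the coloring map
  set F : T × T → T × T := fun b =>
    (restr hT b.1 (delta hT b.1 b.2 + 1), restr hT b.2 (delta hT b.1 b.2 + 1)) with hF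
  -- per-element facts on B₁
  have hfacts : ∀ b ∈ B₁, delta hT b.1 b.2 + 1 < nodeHt hT b.1 ∧
      nodeHt hT b.1 = nodeHt hT b.2 := by
    rintro b ⟨hb, hb1⟩
    have heq := hBhts b hb
    have h1 : delta hT b.1 b.2 + 1 ≤ ds + 1 :=
      add_le_add_left (hdle b hb) 1
    have h2 : delta hT b.1 b.2 + 1 ≤ nodeHt hT b.1 :=
      h1.trans (hdsmu.trans (hmule b hb))
    refine ⟨lt_of_le_of_ne h2 ?_, heq⟩
    intro hcon
    exact hb1 (le_antisymm (hcon ▸ h1) (hdsmu.trans (hmule b hb)))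
  have hFmem : ∀ b ∈ B₁, F b ∈ ({u : T | nodeHt hT u ≤ ds + 1} ×ˢ
      {u : T | nodeHt hT u ≤ ds + 1}) := by
    intro b hb
    obtain ⟨hlt, heq⟩ := hfacts b hb
    have h1 : delta hT b.1 b.2 + 1 ≤ nodeHt hT b.1 := hlt.le
    have h2 : delta hT b.1 b.2 + 1 ≤ nodeHt hT b.2 := heq ▸ h1
    constructor
    · show nodeHt hT (restr hT b.1 _) ≤ ds + 1
      rw [nodeHt_restr hT h1]
      exact add_le_add_left (hdle b hb.1) 1
    · show nodeHt hT (restr hT b.2 _) ≤ ds + 1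
      rw [nodeHt_restr hT h2]
      exact add_le_add_left (hdle b hb.1) 1
  -- pigeonhole
  have hfib : ∃ p : T × T, ¬ {b ∈ B₁ | F b = p}.Countable := by
    by_contra hc
    push_neg at hc
    apply hB₁u
    have hsub : B₁ ⊆ ⋃ p ∈ ({u : T | nodeHt hT u ≤ ds + 1} ×ˢ
        {u : T | nodeHt hT u ≤ ds + 1}), {b ∈ B₁ | F b = p} := by
      intro b hb
      exact Set.mem_biUnion (hFmem b hb) ⟨hb, rfl⟩
    exact Set.Countable.mono hsub ((hLcnt.prod hLcnt).biUnion fun p _ => hc p)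
  obtain ⟨p, hp⟩ := hfib
  refine ⟨{b ∈ B₁ | F b = p}, fun b hb => hb.1.1, hp, p.2, ?_⟩
  rintro b ⟨hb₁, hFb⟩
  have hb : b ∈ B := hb₁.1
  obtain ⟨hlt, heq⟩ := hfacts b hb₁
  set d := delta hT b.1 b.2 with hd
  -- from lexLT: incomparability and lo at level d
  have hlex := hBlex b hb
  have hinc : Incomp b.1 b.2 ∧ lo (restr hT b.1 d) (restr hT b.2 d) := by
    rcases hlex with h | h
    · exact absurd (hBhts b hb) (nodeHt_lt_of_lt hT h).ne
    · exact h
  have hne : b.1 ≠ b.2 := fun h => hinc.1.1 (h ▸ le_rfl)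
  obtain ⟨hdne, hdeq, -⟩ := delta_spec hT hne (hBhts b hb)
  have hd1 : d + 1 ≤ nodeHt hT b.1 := hlt.le
  have hd2 : d + 1 ≤ nodeHt hT b.2 := heq ▸ hd1
  have hdd1 : d ≤ d + 1 := (Order.le_succ d).trans_eq (Ordinal.add_one_eq_succ d).symm
  -- identify c
  have hc2 : p.2 = restr hT b.2 (d + 1) := by rw [← hFb]
  have hcle : p.2 ≤ b.2 := hc2 ▸ restr_le hT hd2
  have hcht : nodeHt hT p.2 = d + 1 := hc2 ▸ nodeHt_restr hT hd2
  have hdc : d ≤ nodeHt hT p.2 := by rw [hcht]; exact hdd1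
  have hcd : restr hT p.2 d = restr hT b.2 d := by
    rw [← restr_trans hT hcle hdc]
  -- second inequality: c <lex b.2, via c < b.2
  have hright : lexLT hT lo p.2 b.2 := by
    left
    refine lt_of_le_of_ne hcle fun h => ?_
    rw [h] at hcht
    exact absurd (hcht ▸ (heq ▸ hlt)) (lt_irrefl _)
  -- first inequality: b.1 <lex c
  have hdel : delta hT b.1 p.2 = d := by
    have hmem : d ∈ {α : Ordinal | restr hT b.1 α ≠ restr hT p.2 α} := by
      rw [Set.mem_setOf_eq, hcd]
      exact hdne
    refine le_antisymm (csInf_le (OrderBot.bddBelow _) hmem) (le_csInf ⟨d, hmem⟩ ?_)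
    intro α hα
    by_contra hcon
    push_neg at hcon
    apply hα
    have h1 : restr hT p.2 α = restr hT b.2 α :=
      (restr_trans hT hcle (by rw [hcht]; exact hcon.le.trans hdd1)).symm
    rw [h1]
    exact hdeq α hcon
  have hleft : lexLT hT lo b.1 p.2 := by
    right
    constructor
    · constructor
      · intro h
        exact absurd (hcht ▸ nodeHt_le_of_le hT h) (not_le.2 hlt)
      · intro h
        have : restr hT b.1 d = restr hT p.2 d :=
          restr_trans hT h hdc
        rw [this, hcd] at hdne
        exact hdne rfl
    · rw [hdel, hcd]
      exact hinc.2
  exact ⟨hleft, hright⟩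

end
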